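/- For the Laurent polynomial f(x,y,z,w) = (1+x+y)^3/(xyzw) + z + w in four variables, the classical period π_f(t) = Σ_{d≥0} α_d t^d, where α_d is the constant term (coefficient of the unit monomial) of f^d, satisfies α_d = 0 unless 3 divides d, and α_{3d} = ((3d)!)^2 / (d!)^6 for all d ≥ 0. -/

import Mathlib

open scoped Nat

/-- The mirror Laurent polynomial of the cubic 4-fold lives in the ring of
Laurent polynomials in 4 variables, modelled as the monoid algebra of `Fin 4 →₀ ℤ`. -/
noncomputable abbrev LaurentPoly4 : Type := AddMonoidAlgebra ℂ (Fin 4 →₀ ℤ)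

/-- The monomial `x₀^{v 0} x₁^{v 1} x₂^{v 2} x₃^{v 3}`. -/
noncomputable def mono4 (v : Fin 4 →₀ ℤ) : LaurentPoly4 := AddMonoidAlgebra.single v 1

/-- `f = (1 + x + y)^3 / (x y z w) + z + w`, the mirror of the cubic 4-fold. -/
noncomputable def cubicMirror : LaurentPoly4 :=
  (1 + mono4 (Finsupp.single 0 1) + mono4 (Finsupp.single 1 1)) ^ 3
      * mono4 (-(Finsupp.single 0 1 + Finsupp.single 1 1 + Finsupp.single 2 1 + Finsupp.single 3 1))
    + mono4 (Finsupp.single 2 1) + mono4 (Finsupp.single 3 1)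

namespace CM

open Finset AddMonoidAlgebra

/-- `1 + x + y`. -/
noncomputable def sXY : LaurentPoly4 :=
  1 + mono4 (Finsupp.single 0 1) + mono4 (Finsupp.single 1 1)

/-- `1/(xyzw)`. -/
noncomputable def M4 : LaurentPoly4 :=
  mono4 (-(Finsupp.single 0 1 + Finsupp.single 1 1 + Finsupp.single 2 1 + Finsupp.single 3 1))

lemma mono4_pow (a : Fin 4 →₀ ℤ) (n : ℕ) : mono4 a ^ n = AddMonoidAlgebra.single (n • a) 1 := by
  simp [mono4, AddMonoidAlgebra.single_pow]

lemma smul_single_int (i : Fin 4) (n : ℕ) :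
    n • Finsupp.single i (1:ℤ) = Finsupp.single i (n:ℤ) := by
  rw [Finsupp.smul_single]; norm_num

/-- The trinomial expansion of `(1+x+y)^m`. -/
lemma sXY_pow (m : ℕ) : sXY ^ m =
    ∑ j ∈ range (m+1), ∑ i ∈ range (m-j+1),
      AddMonoidAlgebra.single (Finsupp.single 0 (i:ℤ) + Finsupp.single 1 (j:ℤ))
        ((m.choose j * (m-j).choose i : ℕ) : ℂ) := by
  have h1 : sXY = mono4 (Finsupp.single 1 1) + (mono4 (Finsupp.single 0 1) + 1) := by
    rw [sXY]; ring
  rw [h1, add_pow]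
  refine Finset.sum_congr rfl fun j hj => ?_
  rw [add_pow, Finset.mul_sum, Finset.sum_mul]
  refine Finset.sum_congr rfl fun i hi => ?_
  simp only [mono4_pow, smul_single_int, one_pow, mul_one, AddMonoidAlgebra.natCast_def]
  rw [mul_assoc, AddMonoidAlgebra.single_mul_single, AddMonoidAlgebra.single_mul_single,
    AddMonoidAlgebra.single_mul_single]
  congr 1
  · abel
  · push_cast; ring

lemma sXY_pow_apply (m : ℕ) (u : Fin 4 →₀ ℤ) :
    (sXY ^ m).coeff u = ∑ j ∈ range (m+1), ∑ i ∈ range (m-j+1),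
      if Finsupp.single 0 (i:ℤ) + Finsupp.single 1 (j:ℤ) = u
        then ((m.choose j * (m-j).choose i : ℕ) : ℂ) else 0 := by
  rw [sXY_pow, AddMonoidAlgebra.coeff_sum, Finset.sum_apply']
  refine Finset.sum_congr rfl fun j hj => ?_
  rw [AddMonoidAlgebra.coeff_sum, Finset.sum_apply']
  refine Finset.sum_congr rfl fun i hi => ?_
  exact Finsupp.single_apply

/-- `(1+x+y)^m` has no `z` or `w` in it. -/
lemma sXY_pow_apply_ne (m : ℕ) (u : Fin 4 →₀ ℤ) (h : u 2 ≠ 0 ∨ u 3 ≠ 0) :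
    (sXY ^ m).coeff u = 0 := by
  rw [sXY_pow_apply]
  refine Finset.sum_eq_zero fun j _ => Finset.sum_eq_zero fun i _ => ?_
  rw [if_neg]
  rintro rfl
  simp [Finsupp.single_apply] at h

/-- The coefficient of `x^k y^k` in `(1+x+y)^m`. -/
lemma sXY_pow_apply_diag (m k : ℕ) :
    (sXY ^ m).coeff (Finsupp.single 0 (k:ℤ) + Finsupp.single 1 (k:ℤ))
      = ((m.choose k * (m-k).choose k : ℕ) : ℂ) := by
  rw [sXY_pow_apply]
  have hiff : ∀ i j : ℕ,
      (Finsupp.single (0:Fin 4) (i:ℤ) + Finsupp.single 1 (j:ℤ)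
        = Finsupp.single 0 (k:ℤ) + Finsupp.single 1 (k:ℤ)) ↔ (i = k ∧ j = k) := by
    intro i j
    constructor
    · intro h
      have h0 := congrArg (fun f => f 0) h
      have h1 := congrArg (fun f => f 1) h
      simp only [Finsupp.add_apply, Finsupp.single_apply] at h0 h1
      norm_num at h0 h1
      exact ⟨by exact_mod_cast h0, by exact_mod_cast h1⟩
    · rintro ⟨rfl, rfl⟩; rfl
  simp only [hiff]
  by_cases hk : k ≤ m
  · rw [Finset.sum_eq_single k]
    · by_cases hk2 : k ≤ m - k
      · rw [Finset.sum_eq_single k]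
        · simp
        · intro i hi hik; simp [hik]
        · intro h; exact absurd (Finset.mem_range.2 (by omega)) h
      · have hz : (m - k).choose k = 0 := Nat.choose_eq_zero_of_lt (by omega)
        rw [Finset.sum_eq_zero, hz, Nat.mul_zero, Nat.cast_zero]
        intro i hi
        rw [if_neg]
        rintro ⟨rfl, -⟩
        exact absurd (Finset.mem_range.1 hi) (by omega)
    · intro j hj hjk
      exact Finset.sum_eq_zero fun i hi => by simp [hjk]
    · intro h; exact absurd (Finset.mem_range.2 (by omega)) h
  · have hz : m.choose k = 0 := Nat.choose_eq_zero_of_lt (by omega)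
    rw [Finset.sum_eq_zero, hz, Nat.zero_mul, Nat.cast_zero]
    intro j hj
    refine Finset.sum_eq_zero fun i hi => ?_
    rw [if_neg]
    rintro ⟨rfl, rfl⟩
    exact absurd (Finset.mem_range.1 hj) (by omega)

/-- Constant term of a single term in the multinomial expansion of `f^n`. -/
lemma term_eval (k j i C1 C2 : ℕ) :
    ((sXY ^ 3 * M4) ^ k
        * (mono4 (Finsupp.single 2 1) ^ j * mono4 (Finsupp.single 3 1) ^ i
            * (C2 : LaurentPoly4))
        * (C1 : LaurentPoly4)).coeff 0
      = ((C1 * C2 : ℕ) : ℂ) *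
          (sXY ^ (3 * k)).coeff (Finsupp.single 0 (k:ℤ) + Finsupp.single 1 (k:ℤ)
            + Finsupp.single 2 ((k:ℤ) - j) + Finsupp.single 3 ((k:ℤ) - i)) := by
  rw [mul_pow, ← pow_mul]
  simp only [M4, mono4_pow, AddMonoidAlgebra.natCast_def, mul_assoc,
    AddMonoidAlgebra.single_mul_single, one_mul, mul_one]
  rw [AddMonoidAlgebra.coeff_mul_single_apply, mul_comm]
  congr 2
  · push_cast; ring
  · ext a; fin_cases a <;>
      simp [Finsupp.add_apply, Finsupp.sub_apply, Finsupp.single_apply, smul_single_int] <;>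
      push_cast <;> ring

/-- The full expansion of the constant term of `f^n`. -/
lemma master (n : ℕ) : (cubicMirror ^ n).coeff 0 =
    ∑ k ∈ range (n+1), ∑ j ∈ range (n-k+1),
      ((n.choose k * (n-k).choose j : ℕ) : ℂ) *
        (sXY ^ (3*k)).coeff (Finsupp.single 0 (k:ℤ) + Finsupp.single 1 (k:ℤ)
          + Finsupp.single 2 ((k:ℤ) - j) + Finsupp.single 3 ((k:ℤ) - ((n-k-j : ℕ) : ℤ))) := by
  have hco : cubicMirror = (sXY ^ 3 * M4)
      + (mono4 (Finsupp.single 2 1) + mono4 (Finsupp.single 3 1)) := by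
    rw [cubicMirror, sXY, M4]; ring
  rw [hco, add_pow, AddMonoidAlgebra.coeff_sum, Finset.sum_apply']
  refine Finset.sum_congr rfl fun k hk => ?_
  rw [add_pow, Finset.mul_sum, Finset.sum_mul, AddMonoidAlgebra.coeff_sum, Finset.sum_apply']
  refine Finset.sum_congr rfl fun j hj => ?_
  rw [term_eval]

lemma term_vanish {n k j : ℕ} (h2 : (k:ℤ) ≠ (j:ℤ) ∨ (k:ℤ) ≠ ((n-k-j:ℕ):ℤ)) :
    (sXY ^ (3*k)).coeff (Finsupp.single 0 (k:ℤ) + Finsupp.single 1 (k:ℤ)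
      + Finsupp.single 2 ((k:ℤ) - (j:ℤ)) + Finsupp.single 3 ((k:ℤ) - ((n-k-j : ℕ):ℤ))) = 0 := by
  apply sXY_pow_apply_ne
  rcases h2 with h | h
  · left
    simp only [Finsupp.add_apply, Finsupp.single_apply]
    norm_num
    omega
  · right
    simp only [Finsupp.add_apply, Finsupp.single_apply]
    norm_num
    omega

lemma natid (d : ℕ) : ((3*d).choose d * (3*d - d).choose d) * (d ! * d ! * d !) = (3*d)! := by
  have h1 : (2*d).choose d * d ! * d ! = (2*d)! := by
    have := Nat.choose_mul_factorial_mul_factorial (show d ≤ 2*d by omega)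
    simpa [show 2*d - d = d by omega] using this
  have h2 : (3*d).choose d * d ! * (2*d)! = (3*d)! := by
    have := Nat.choose_mul_factorial_mul_factorial (show d ≤ 3*d by omega)
    simpa [show 3*d - d = 2*d by omega] using this
  have h3 : 3*d - d = 2*d := by omega
  rw [h3]
  calc (3*d).choose d * (2*d).choose d * (d ! * d ! * d !)
      = (3*d).choose d * d ! * ((2*d).choose d * d ! * d !) := by ring
    _ = (3*d).choose d * d ! * (2*d)! := by rw [h1]
    _ = (3*d)! := h2

end CM

/-- The constant term of `f^d` vanishes unless `3 ∣ d`, and equals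
`((3d)!)² / (d!)⁶` for exponent `3d`. -/
theorem cubic_mirror_period_coeffs :
    (∀ d : ℕ, ¬ (3 ∣ d) → (cubicMirror ^ d).coeff 0 = 0) ∧
    (∀ d : ℕ, (cubicMirror ^ (3 * d)).coeff 0 =
      (((3 * d)! : ℂ) * ((3 * d)! : ℂ)) / ((d ! : ℂ)) ^ 6) := by
  constructor
  · intro n hn
    rw [CM.master]
    refine Finset.sum_eq_zero fun k hk => Finset.sum_eq_zero fun j hj => ?_
    simp only [Finset.mem_range] at hk hj
    rw [CM.term_vanish, mul_zero]
    by_cases hjk : j = k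
    · right; subst hjk; omega
    · left; omega
  · intro d
    rw [CM.master]
    rw [Finset.sum_eq_single d, Finset.sum_eq_single d]
    · have hu : Finsupp.single (0 : Fin 4) (d:ℤ) + Finsupp.single 1 (d:ℤ)
          + Finsupp.single 2 ((d:ℤ) - (d:ℤ)) + Finsupp.single 3 ((d:ℤ) - ((3*d-d-d : ℕ):ℤ))
          = Finsupp.single 0 (d:ℤ) + Finsupp.single 1 (d:ℤ) := by
        ext a; fin_cases a <;>
          simp only [Finsupp.add_apply, Finsupp.single_apply] <;> norm_num <;> omega
      rw [hu, CM.sXY_pow_apply_diag]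
      have hne : ((d ! : ℂ)) ≠ 0 := Nat.cast_ne_zero.2 (Nat.factorial_ne_zero d)
      rw [eq_div_iff (pow_ne_zero _ hne)]
      have key : (((3*d).choose d * (3*d - d).choose d) * ((3*d).choose d * (3*d - d).choose d))
          * (d ! ^ 6) = (3*d)! * (3*d)! := by
        have h := CM.natid d
        calc (((3*d).choose d * (3*d - d).choose d) * ((3*d).choose d * (3*d - d).choose d))
            * (d ! ^ 6)
            = (((3*d).choose d * (3*d - d).choose d) * (d ! * d ! * d !))
              * (((3*d).choose d * (3*d - d).choose d) * (d ! * d ! * d !)) := by ring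
          _ = (3*d)! * (3*d)! := by rw [h]
      exact_mod_cast congrArg (Nat.cast (R := ℂ)) key
    · intro j hj hjd
      simp only [Finset.mem_range] at hj
      rw [CM.term_vanish, mul_zero]
      left; omega
    · intro hd; exact absurd (Finset.mem_range.2 (by omega)) hd
    · intro k hk hkd
      simp only [Finset.mem_range] at hk
      refine Finset.sum_eq_zero fun j hj => ?_
      simp only [Finset.mem_range] at hj
      rw [CM.term_vanish, mul_zero]
      by_cases hjk : j = k
      · right; subst hjk; omega
      · left; omega
    · intro hd; exact absurd (Finset.mem_range.2 (by omega)) hd
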